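/- If Q̃ ⊂ Q is compact and A_Q ⊂ Q̃, then A_Q = A_{Q̃}, i.e. the global relative attractor is unchanged when Q is replaced by any compact subset containing the attractor. -/

import Mathlib

/-- If `Q̃ ⊆ Q` is compact and `A_Q ⊆ Q̃`, then `A_Q = A_{Q̃}`. -/
theorem attractor_restrict (d : ℕ)
    (f : EuclideanSpace ℝ (Fin d) ≃ₜ EuclideanSpace ℝ (Fin d))
    (Q Qt : Set (EuclideanSpace ℝ (Fin d)))
    (hQ : IsCompact Q) (hQt : IsCompact Qt) (hsub : Qt ⊆ Q)
    (hA : (⋂ k : ℕ, (⇑f)^[k] '' Q) ⊆ Qt) :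
    (⋂ k : ℕ, (⇑f)^[k] '' Q) = ⋂ k : ℕ, (⇑f)^[k] '' Qt := by
  have hLI : Function.LeftInverse f.symm f := f.symm_apply_apply
  have hRI : Function.RightInverse f.symm f := f.apply_symm_apply
  apply Set.Subset.antisymm
  · intro x hx
    simp only [Set.mem_iInter] at hx ⊢
    intro k
    have hmem : (⇑f.symm)^[k] x ∈ Qt := by
      apply hA
      simp only [Set.mem_iInter]
      intro n
      obtain ⟨y, hyQ, hyx⟩ := hx (n + k)
      refine ⟨y, hyQ, ?_⟩
      have hx' : x = (⇑f)^[k] ((⇑f)^[n] y) := by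
        rw [← Function.iterate_add_apply, ← hyx, Nat.add_comm]
      rw [hx', (hLI.iterate k) ((⇑f)^[n] y)]
    refine ⟨(⇑f.symm)^[k] x, hmem, (hRI.iterate k) x⟩
  · exact Set.iInter_mono fun k => Set.image_mono hsub
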